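/- arXiv:0910.0987 — 2 statements merged into one kernel-verified Lean document; each statement's English description precedes it below -/
import Mathlib

section
/- Symmetry identity for generalized Euler polynomials (order 1): for all n ≥ 0 and all x, ∑_{j=0}^{n} C(n,j) w₂^j w₁^{n−j} E_{n−j,χ}(w₂ x) T_{j,χ}(w₁ d − 1) = ∑_{j=0}^{n} C(n,j) w₁^j w₂^{n−j} E_{n−j,χ}(w₁ x) T_{j,χ}(w₂ d − 1). -/
open PowerSeries Finset

/-- Generating function `2 ∑_{a<d} (-1)^a χ(a) e^{at} / (e^{dt}+1)` as a formal power series. -/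
noncomputable def genEulerSeries (d : ℕ) (χ : DirichletCharacter ℂ d) : PowerSeries ℂ :=
  (2 * ∑ a ∈ Finset.range d, ((-1 : ℂ) ^ a * χ (a : ZMod d)) •
      PowerSeries.rescale (a : ℂ) (PowerSeries.exp ℂ)) *
    (PowerSeries.rescale (d : ℂ) (PowerSeries.exp ℂ) + 1)⁻¹

/-- Generalized higher-order Euler polynomial `E_{n,χ}^{(m)}(x)`: `n!` times the `n`-th
coefficient of `(genEulerSeries d χ)^m * e^{xt}`. -/
noncomputable def genEuler (d : ℕ) (χ : DirichletCharacter ℂ d) (m n : ℕ) (x : ℂ) : ℂ :=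
  (n.factorial : ℂ) *
    PowerSeries.coeff n ((genEulerSeries d χ) ^ m * PowerSeries.rescale x (PowerSeries.exp ℂ))

/-- Alternating power sum `T_{k,χ}(m) = ∑_{l=0}^{m} (-1)^l χ(l) l^k`. -/
noncomputable def altPowerSum (d : ℕ) (χ : DirichletCharacter ℂ d) (k m : ℕ) : ℂ :=
  ∑ l ∈ Finset.range (m + 1), (-1 : ℂ) ^ l * χ (l : ZMod d) * (l : ℂ) ^ k

/-! ### Auxiliary machinery -/

/-- `e^{ct}` as a power series. -/
noncomputable def E' (c : ℂ) : PowerSeries ℂ := PowerSeries.rescale c (PowerSeries.exp ℂ)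

lemma E'_mul (a b : ℂ) : E' a * E' b = E' (a + b) := PowerSeries.exp_mul_exp_eq_exp_add a b

lemma rescale_E' (a b : ℂ) : rescale b (E' a) = E' (a * b) := PowerSeries.rescale_rescale _ a b

lemma coeff_E' (l : ℂ) (j : ℕ) : PowerSeries.coeff j (E' l) = l^j * ((j.factorial:ℂ))⁻¹ := by
  rw [E', coeff_rescale, coeff_exp]; norm_num

lemma constCoeff_E' (a : ℂ) : constantCoeff (E' a + 1) = 2 := by
  rw [map_add, map_one, ← coeff_zero_eq_constantCoeff_apply, coeff_E']; norm_num

lemma constCoeff_E'_ne (a : ℂ) : constantCoeff (E' a + 1) ≠ 0 := by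
  rw [constCoeff_E']; norm_num

lemma E'_ne (a : ℂ) : (E' a + 1) ≠ 0 := fun h => by
  have := constCoeff_E' a; rw [h] at this; simp at this

lemma rescale_inv_E' (a b : ℂ) : rescale b ((E' a + 1)⁻¹) = (E' (a * b) + 1)⁻¹ := by
  rw [PowerSeries.eq_inv_iff_mul_eq_one (constCoeff_E'_ne (a*b))]
  have h : E' (a*b) + 1 = rescale b (E' a + 1) := by rw [map_add, map_one, rescale_E']
  rw [h, ← map_mul, PowerSeries.inv_mul_cancel _ (constCoeff_E'_ne a), map_one]

noncomputable def cc (d : ℕ) (χ : DirichletCharacter ℂ d) (l : ℕ) : ℂ :=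
  (-1 : ℂ) ^ l * χ (l : ZMod d)

lemma cc_add (d : ℕ) (χ : DirichletCharacter ℂ d) (k l : ℕ) (hk : Odd k) (hdk : d ∣ k) :
    cc d χ (l + k) = - cc d χ l := by
  unfold cc
  have h1 : ((l + k : ℕ) : ZMod d) = (l : ZMod d) := by
    push_cast
    rw [(ZMod.natCast_eq_zero_iff k d).mpr hdk, add_zero]
  rw [h1, pow_add, hk.neg_one_pow]
  ring

noncomputable def Sser (d : ℕ) (χ : DirichletCharacter ℂ d) (m : ℕ) : PowerSeries ℂ :=
  ∑ l ∈ range (m+1), cc d χ l • E' l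

noncomputable def Aser (d : ℕ) (χ : DirichletCharacter ℂ d) : PowerSeries ℂ :=
  ∑ a ∈ range d, cc d χ a • E' a

lemma genEulerSeries_eq (d : ℕ) (χ : DirichletCharacter ℂ d) :
    genEulerSeries d χ = 2 * Aser d χ * (E' d + 1)⁻¹ := rfl

lemma tele {M : Type*} [AddCommGroup M] (g : ℕ → M) (N k : ℕ) (h : k ≤ N) :
    ∑ l ∈ range N, g l - ∑ l ∈ range N, g (l + k)
      = ∑ l ∈ range k, g l - ∑ l ∈ range k, g (N + l) := by
  have h1 : ∑ l ∈ range N, g (l + k) = ∑ l ∈ Ico k (N + k), g l := by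
    rw [Finset.sum_Ico_eq_sum_range]; simp [add_comm]
  have h2 : ∑ l ∈ range N, g l = ∑ l ∈ Ico 0 k, g l + ∑ l ∈ Ico k N, g l := by
    rw [Finset.sum_Ico_consecutive _ (Nat.zero_le k) h, ← Finset.range_eq_Ico]
  have h3 : ∑ l ∈ Ico k (N+k), g l = ∑ l ∈ Ico k N, g l + ∑ l ∈ Ico N (N+k), g l := by
    rw [Finset.sum_Ico_consecutive _ h (Nat.le_add_right N k)]
  have h4 : ∑ l ∈ Ico N (N+k), g l = ∑ l ∈ range k, g (N + l) := by
    rw [Finset.sum_Ico_eq_sum_range]; simp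
  rw [h1, h2, h3, h4, Finset.range_eq_Ico]; abel

/-- Key identity: `S_{wd-1}(t) (e^{dt}+1) = A(t) (e^{wdt}+1)`. -/
lemma key (d : ℕ) (hd : Odd d) (hd0 : 0 < d) (χ : DirichletCharacter ℂ d)
    (w : ℕ) (hw : Odd w) (hw0 : 0 < w) :
    Sser d χ (w * d - 1) * (E' d + 1) = Aser d χ * (E' ((w * d : ℕ) : ℂ) + 1) := by
  set g : ℕ → PowerSeries ℂ := fun l => cc d χ l • E' l with hg
  have hm : w * d - 1 + 1 = w * d := Nat.succ_pred_eq_of_pos (Nat.mul_pos hw0 hd0)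
  have hS : Sser d χ (w * d - 1) = ∑ l ∈ range (w * d), g l := by rw [Sser, hm]
  have hSd : Sser d χ (w * d - 1) * E' d = - ∑ l ∈ range (w * d), g (l + d) := by
    rw [hS, Finset.sum_mul, ← Finset.sum_neg_distrib]
    refine Finset.sum_congr rfl fun l _ => ?_
    rw [hg]
    simp only [smul_mul_assoc, E'_mul]
    rw [cc_add d χ d l hd dvd_rfl]
    push_cast
    simp [neg_smul]
  have hA : Aser d χ * E' ((w*d : ℕ) : ℂ) = - ∑ l ∈ range d, g (w * d + l) := by
    rw [Aser, Finset.sum_mul, ← Finset.sum_neg_distrib]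
    refine Finset.sum_congr rfl fun a _ => ?_
    rw [hg]
    simp only [smul_mul_assoc, E'_mul]
    have hcc : cc d χ (w * d + a) = - cc d χ a := by
      rw [add_comm]
      exact cc_add d χ (w*d) a (hw.mul hd) (dvd_mul_left d w)
    rw [hcc]
    push_cast
    simp [neg_smul, add_comm]
  have ht := tele g (w * d) d (Nat.le_mul_of_pos_left d hw0)
  have hAs : Aser d χ = ∑ l ∈ range d, g l := rfl
  rw [mul_add, mul_add, mul_one, mul_one, hSd, hA, hS, hAs]
  linear_combination ht

/-- Binomial convolution of coefficients. -/
lemma conv (F G : PowerSeries ℂ) (n : ℕ) :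
    ∑ j ∈ range (n+1), (n.choose j : ℂ) * ((j.factorial : ℂ) * PowerSeries.coeff j F)
        * (((n-j).factorial : ℂ) * PowerSeries.coeff (n-j) G)
      = (n.factorial : ℂ) * PowerSeries.coeff n (F * G) := by
  rw [PowerSeries.coeff_mul, Finset.Nat.sum_antidiagonal_eq_sum_range_succ_mk, Finset.mul_sum]
  refine Finset.sum_congr rfl fun j hj => ?_
  have hjn : j ≤ n := Nat.lt_succ_iff.mp (Finset.mem_range.mp hj)
  have h : (n.choose j : ℂ) * j.factorial * (n-j).factorial = n.factorial := by
    exact_mod_cast congrArg Nat.cast (Nat.choose_mul_factorial_mul_factorial hjn)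
  linear_combination PowerSeries.coeff j F * PowerSeries.coeff (n-j) G * h

lemma extract_T (d : ℕ) (χ : DirichletCharacter ℂ d) (v : ℕ) (m j : ℕ) :
    (j.factorial : ℂ) * PowerSeries.coeff j (rescale (v : ℂ) (Sser d χ m))
      = (v : ℂ)^j * altPowerSum d χ j m := by
  have hfac : (j.factorial : ℂ) ≠ 0 := by exact_mod_cast j.factorial_ne_zero
  rw [coeff_rescale, Sser, map_sum, altPowerSum, Finset.mul_sum, Finset.mul_sum, Finset.mul_sum]
  refine Finset.sum_congr rfl fun l _ => ?_
  rw [map_smul, smul_eq_mul, coeff_E', cc]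
  field_simp

lemma extract_E (d : ℕ) (χ : DirichletCharacter ℂ d) (u k : ℕ) (y : ℂ) :
    ((k.factorial : ℂ)) * PowerSeries.coeff k
        (rescale (u : ℂ) (genEulerSeries d χ ^ 1 * PowerSeries.rescale y (PowerSeries.exp ℂ)))
      = (u : ℂ)^k * genEuler d χ 1 k y := by
  rw [coeff_rescale, genEuler]; ring

theorem symmetry_order_one (d : ℕ) (hd : Odd d) (hd0 : 0 < d)
    (χ : DirichletCharacter ℂ d) (w₁ w₂ : ℕ) (hw₁ : Odd w₁) (hw₁0 : 0 < w₁)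
    (hw₂ : Odd w₂) (hw₂0 : 0 < w₂) (n : ℕ) (x : ℂ) :
    ∑ j ∈ Finset.range (n + 1), (n.choose j : ℂ) * (w₂ : ℂ) ^ j * (w₁ : ℂ) ^ (n - j) *
        genEuler d χ 1 (n - j) ((w₂ : ℂ) * x) * altPowerSum d χ j (w₁ * d - 1) =
      ∑ j ∈ Finset.range (n + 1), (n.choose j : ℂ) * (w₁ : ℂ) ^ j * (w₂ : ℂ) ^ (n - j) *
        genEuler d χ 1 (n - j) ((w₁ : ℂ) * x) * altPowerSum d χ j (w₂ * d - 1) := by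
  -- each side is `n! * coeff n` of an explicit power series product
  have side : ∀ u v : ℕ,
      ∑ j ∈ Finset.range (n + 1), (n.choose j : ℂ) * (v : ℂ) ^ j * (u : ℂ) ^ (n - j) *
          genEuler d χ 1 (n - j) ((v : ℂ) * x) * altPowerSum d χ j (u * d - 1)
        = (n.factorial : ℂ) * PowerSeries.coeff n
            (rescale (v : ℂ) (Sser d χ (u * d - 1)) *
              rescale (u : ℂ) (genEulerSeries d χ ^ 1 *
                PowerSeries.rescale ((v : ℂ) * x) (PowerSeries.exp ℂ))) := by
    intro u v
    rw [← conv]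
    refine Finset.sum_congr rfl fun j hj => ?_
    rw [extract_T, extract_E]
    ring
  rw [side w₁ w₂, side w₂ w₁]
  -- it remains to prove the symmetry of the power series
  have K : ∀ u v : ℕ, Odd u → 0 < u →
      rescale (v : ℂ) (Sser d χ (u * d - 1)) * (E' ((d:ℂ) * v) + 1)
        = rescale (v : ℂ) (Aser d χ) * (E' (((u * d : ℕ) : ℂ) * v) + 1) := by
    intro u v hu hu0
    have h := congrArg (rescale (v : ℂ)) (key d hd hd0 χ u hu hu0)
    rwa [map_mul, map_mul, map_add, map_add, map_one, rescale_E', rescale_E'] at h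
  have hres : ∀ (u : ℕ) (y : ℂ),
      rescale (u : ℂ) (genEulerSeries d χ ^ 1 * PowerSeries.rescale y (PowerSeries.exp ℂ))
        = 2 * rescale (u : ℂ) (Aser d χ) * (E' ((d:ℂ) * u) + 1)⁻¹ * E' (y * u) := by
    intro u y
    rw [pow_one, genEulerSeries_eq, map_mul, map_mul, map_mul, rescale_inv_E']
    have h2 : rescale (u : ℂ) (2 : PowerSeries ℂ) = 2 := by
      rw [map_ofNat]
    rw [h2]
    have : PowerSeries.rescale y (PowerSeries.exp ℂ) = E' y := rfl
    rw [this, rescale_E']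
  have hPQ : rescale (w₂ : ℂ) (Sser d χ (w₁ * d - 1)) *
        rescale (w₁ : ℂ) (genEulerSeries d χ ^ 1 *
          PowerSeries.rescale ((w₂ : ℂ) * x) (PowerSeries.exp ℂ))
      = rescale (w₁ : ℂ) (Sser d χ (w₂ * d - 1)) *
        rescale (w₂ : ℂ) (genEulerSeries d χ ^ 1 *
          PowerSeries.rescale ((w₁ : ℂ) * x) (PowerSeries.exp ℂ)) := by
    rw [hres, hres]
    set S2 := rescale (w₂ : ℂ) (Sser d χ (w₁ * d - 1)) with hS2
    set S1 := rescale (w₁ : ℂ) (Sser d χ (w₂ * d - 1)) with hS1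
    set A1 := rescale (w₁ : ℂ) (Aser d χ) with hA1
    set A2 := rescale (w₂ : ℂ) (Aser d χ) with hA2
    apply mul_right_cancel₀ (E'_ne ((d:ℂ) * w₁))
    apply mul_right_cancel₀ (E'_ne ((d:ℂ) * w₂))
    have c1 : (E' ((d:ℂ) * w₁) + 1)⁻¹ * (E' ((d:ℂ) * w₁) + 1) = 1 :=
      PowerSeries.inv_mul_cancel _ (constCoeff_E'_ne _)
    have c2 : (E' ((d:ℂ) * w₂) + 1)⁻¹ * (E' ((d:ℂ) * w₂) + 1) = 1 :=
      PowerSeries.inv_mul_cancel _ (constCoeff_E'_ne _)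
    calc S2 * (2 * A1 * (E' ((d:ℂ) * w₁) + 1)⁻¹ * E' ((w₂:ℂ) * x * w₁))
            * (E' ((d:ℂ) * w₁) + 1) * (E' ((d:ℂ) * w₂) + 1)
        = (S2 * (E' ((d:ℂ) * w₂) + 1)) * ((E' ((d:ℂ) * w₁) + 1)⁻¹ * (E' ((d:ℂ) * w₁) + 1))
            * (2 * A1 * E' ((w₂:ℂ) * x * w₁)) := by ring
      _ = (A2 * (E' (((w₁ * d : ℕ) : ℂ) * w₂) + 1)) * 1 * (2 * A1 * E' ((w₂:ℂ) * x * w₁)) := by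
            rw [hS2, K w₁ w₂ hw₁ hw₁0, c1, ← hA2]
      _ = (A1 * (E' (((w₂ * d : ℕ) : ℂ) * w₁) + 1)) * 1 * (2 * A2 * E' ((w₁:ℂ) * x * w₂)) := by
            have e1 : (((w₁ * d : ℕ) : ℂ) * w₂) = (((w₂ * d : ℕ) : ℂ) * w₁) := by push_cast; ring
            have e2 : ((w₂:ℂ) * x * w₁) = ((w₁:ℂ) * x * w₂) := by ring
            rw [e1, e2]; ring
      _ = (S1 * (E' ((d:ℂ) * w₁) + 1)) * ((E' ((d:ℂ) * w₂) + 1)⁻¹ * (E' ((d:ℂ) * w₂) + 1))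
            * (2 * A2 * E' ((w₁:ℂ) * x * w₂)) := by
            rw [hS1, K w₂ w₁ hw₂ hw₂0, c2, ← hA1]
      _ = S1 * (2 * A2 * (E' ((d:ℂ) * w₂) + 1)⁻¹ * E' ((w₁:ℂ) * x * w₂))
            * (E' ((d:ℂ) * w₁) + 1) * (E' ((d:ℂ) * w₂) + 1) := by ring
  rw [hPQ]
end

section
/- Multiplication-type symmetry for generalized Euler polynomials: for all n ≥ 0 and all x, w₁^n ∑_{i=0}^{w₁ d − 1} (−1)^i χ(i) E_{n,χ}(w₂ x + (w₂/w₁) i) = w₂^n ∑_{i=0}^{w₂ d − 1} (−1)^i χ(i) E_{n,χ}(w₁ x + (w₁/w₂) i). -/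
open PowerSeries Finset

noncomputable def EE (c : ℂ) : PowerSeries ℂ := PowerSeries.rescale c (PowerSeries.exp ℂ)

lemma EE_mul (a b : ℂ) : EE a * EE b = EE (a + b) := PowerSeries.exp_mul_exp_eq_exp_add a b

lemma EE_zero : EE (0 : ℂ) = 1 := by
  simp [EE, PowerSeries.rescale_zero, PowerSeries.constantCoeff_exp]

lemma constantCoeff_EE (a : ℂ) : PowerSeries.constantCoeff (EE a) = 1 := by
  have h := PowerSeries.coeff_rescale (PowerSeries.exp ℂ) a 0
  rw [pow_zero, one_mul] at h
  rw [EE, ← PowerSeries.coeff_zero_eq_constantCoeff_apply, h,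
    PowerSeries.coeff_zero_eq_constantCoeff_apply, PowerSeries.constantCoeff_exp]

lemma rescale_C' (a r : ℂ) : PowerSeries.rescale a (PowerSeries.C r) = PowerSeries.C r := by
  ext n
  simp only [PowerSeries.coeff_rescale, PowerSeries.coeff_C, mul_ite, mul_zero]
  split_ifs with h
  · subst h; simp
  · rfl

lemma rescale_smul' (a r : ℂ) (f : PowerSeries ℂ) :
    PowerSeries.rescale a (r • f) = r • PowerSeries.rescale a f := by
  rw [PowerSeries.smul_eq_C_mul, map_mul, rescale_C', PowerSeries.smul_eq_C_mul]

lemma rescale_EE (a b : ℂ) : PowerSeries.rescale b (EE a) = EE (a * b) := by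
  rw [EE, PowerSeries.rescale_rescale]; rfl

/-- telescoping geometric sum -/
lemma geom_lemma (c : ℂ) (w : ℕ) :
    (∑ j ∈ Finset.range w, ((-1 : ℂ) ^ j) • EE (c * j)) * (EE c + 1)
      = 1 + ((-1 : ℂ) ^ (w + 1)) • EE (c * w) := by
  induction w with
  | zero => simp [EE_zero]
  | succ w ih =>
    rw [Finset.sum_range_succ, add_mul, ih]
    have h1 : EE (c * w) * EE c = EE (c * (w + 1)) := by
      rw [EE_mul]; ring_nf
    push_cast
    rw [smul_mul_assoc, mul_add, mul_one, h1]
    rw [pow_succ (-1 : ℂ) (w + 1)]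
    simp only [smul_add]
    module

/-- splitting the sum over `range (w*d)` -/
lemma split_lemma (d : ℕ) (hd : Odd d) (χ : DirichletCharacter ℂ d) (c : ℂ) (w : ℕ) :
    (∑ i ∈ Finset.range (w * d), ((-1 : ℂ) ^ i * χ (i : ZMod d)) • EE (c * i))
      = (∑ a ∈ Finset.range d, ((-1 : ℂ) ^ a * χ (a : ZMod d)) • EE (c * a)) *
        (∑ j ∈ Finset.range w, ((-1 : ℂ) ^ j) • EE (c * d * j)) := by
  induction w with
  | zero => simp
  | succ w ih =>
    have hmul : (w + 1) * d = w * d + d := by ring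
    rw [hmul, Finset.sum_range_add, ih, Finset.sum_range_succ, mul_add]
    congr 1
    rw [Finset.sum_mul]
    apply Finset.sum_congr rfl
    intro a _
    have hcast : (((w * d + a : ℕ)) : ZMod d) = (a : ZMod d) := by
      push_cast
      simp [ZMod.natCast_self]
    have hsign : ((-1 : ℂ)) ^ (w * d + a) = (-1 : ℂ) ^ w * (-1 : ℂ) ^ a := by
      rw [pow_add, mul_comm w d, pow_mul, hd.neg_one_pow]
    have hE : EE (c * (w * d + a : ℕ)) = EE (c * a) * EE (c * d * w) := by
      rw [EE_mul]
      push_cast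
      ring_nf
    rw [hcast, hsign, hE, smul_mul_assoc, mul_smul_comm, smul_smul]
    congr 1
    ring

lemma EE_ne (c : ℂ) : EE c + 1 ≠ 0 := by
  intro h
  have h2 := congrArg (PowerSeries.constantCoeff) h
  rw [map_add, constantCoeff_EE, map_one, map_zero] at h2
  norm_num at h2

/-- `F_c * (E(dc)+1) = 2 * f_c` where `F_c = rescale c F`. -/
lemma rescaleF (d : ℕ) (χ : DirichletCharacter ℂ d) (c : ℂ) :
    (PowerSeries.rescale c (genEulerSeries d χ)) * (EE (d * c) + 1)
      = 2 * ∑ a ∈ Finset.range d, ((-1 : ℂ) ^ a * χ (a : ZMod d)) • EE ((a : ℂ) * c) := by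
  have hbase : (genEulerSeries d χ) * (EE (d : ℂ) + 1)
      = 2 * ∑ a ∈ Finset.range d, ((-1 : ℂ) ^ a * χ (a : ZMod d)) • EE (a : ℂ) := by
    rw [genEulerSeries]
    have h2 := constantCoeff_EE (d : ℂ)
    rw [EE] at h2
    have hc : PowerSeries.constantCoeff
        (PowerSeries.rescale (d : ℂ) (PowerSeries.exp ℂ) + 1) ≠ 0 := by
      rw [map_add, h2, map_one]; norm_num
    simp only [EE]
    rw [mul_assoc, PowerSeries.inv_mul_cancel _ hc, mul_one]
  have := congrArg (PowerSeries.rescale c) hbase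
  rw [map_mul, map_add, map_one, map_mul, map_ofNat, map_sum] at this
  simp only [rescale_smul'] at this
  rw [show PowerSeries.rescale c (EE (d : ℂ)) = EE ((d : ℂ) * c) from rescale_EE _ _] at this
  simpa only [rescale_EE] using this

lemma EE_def (c : ℂ) : PowerSeries.rescale c (PowerSeries.exp ℂ) = EE c := rfl

lemma key_identity (d : ℕ) (hd : Odd d) (χ : DirichletCharacter ℂ d) (w₁ w₂ : ℕ)
    (hw₁ : Odd w₁) (hw₂ : Odd w₂) :
    PowerSeries.rescale (w₁ : ℂ) (genEulerSeries d χ) *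
        ∑ i ∈ Finset.range (w₁ * d), ((-1 : ℂ) ^ i * χ (i : ZMod d)) • EE ((w₂ : ℂ) * i) =
      PowerSeries.rescale (w₂ : ℂ) (genEulerSeries d χ) *
        ∑ i ∈ Finset.range (w₂ * d), ((-1 : ℂ) ^ i * χ (i : ZMod d)) • EE ((w₁ : ℂ) * i) := by
  have hB : (EE ((w₁ : ℂ) * d) + 1) * (EE ((w₂ : ℂ) * d) + 1) ≠ 0 :=
    mul_ne_zero (EE_ne _) (EE_ne _)
  apply mul_right_cancel₀ hB
  have hf : ∀ w : ℕ,
      PowerSeries.rescale (w : ℂ) (genEulerSeries d χ) * (EE ((w : ℂ) * d) + 1)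
        = 2 * ∑ a ∈ Finset.range d, ((-1 : ℂ) ^ a * χ (a : ZMod d)) • EE ((w : ℂ) * a) := by
    intro w
    have h := rescaleF d χ (w : ℂ)
    rw [show (d : ℂ) * (w : ℂ) = (w : ℂ) * d from mul_comm _ _] at h
    rw [h]
    congr 1
    exact Finset.sum_congr rfl fun a _ => by rw [mul_comm (a : ℂ)]
  have hg : ∀ (v w : ℕ), Odd w →
      (∑ j ∈ Finset.range w, ((-1 : ℂ) ^ j) • EE ((v : ℂ) * d * j)) * (EE ((v : ℂ) * d) + 1)
        = 1 + EE ((v : ℂ) * d * w) := by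
    intro v w hw
    rw [geom_lemma, (hw.add_one).neg_one_pow, one_smul]
  rw [split_lemma d hd χ ((w₂ : ℂ)) w₁, split_lemma d hd χ ((w₁ : ℂ)) w₂]
  have h1 := hf w₁
  have h2 := hf w₂
  have h3 := hg w₂ w₁ hw₁
  have h4 := hg w₁ w₂ hw₂
  rw [show (w₁ : ℂ) * d * w₂ = (w₂ : ℂ) * d * w₁ by ring] at h4
  set F₁ := PowerSeries.rescale (w₁ : ℂ) (genEulerSeries d χ)
  set F₂ := PowerSeries.rescale (w₂ : ℂ) (genEulerSeries d χ)
  set f₁ := ∑ a ∈ Finset.range d, ((-1 : ℂ) ^ a * χ (a : ZMod d)) • EE ((w₁ : ℂ) * a)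
  set f₂ := ∑ a ∈ Finset.range d, ((-1 : ℂ) ^ a * χ (a : ZMod d)) • EE ((w₂ : ℂ) * a)
  set gL := ∑ j ∈ Finset.range w₁, ((-1 : ℂ) ^ j) • EE ((w₂ : ℂ) * d * j)
  set gR := ∑ j ∈ Finset.range w₂, ((-1 : ℂ) ^ j) • EE ((w₁ : ℂ) * d * j)
  set B₁ := EE ((w₁ : ℂ) * d) + 1
  set B₂ := EE ((w₂ : ℂ) * d) + 1
  set T := EE ((w₂ : ℂ) * d * w₁)
  linear_combination (f₂ * gL * B₂) * h1 + 2 * f₁ * f₂ * h3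
    - (f₁ * gR * B₁) * h2 - 2 * f₁ * f₂ * h4

theorem multiplication_symmetry (d : ℕ) (hd : Odd d) (hd0 : 0 < d)
    (χ : DirichletCharacter ℂ d) (w₁ w₂ : ℕ) (hw₁ : Odd w₁) (hw₁0 : 0 < w₁)
    (hw₂ : Odd w₂) (hw₂0 : 0 < w₂) (n : ℕ) (x : ℂ) :
    (w₁ : ℂ) ^ n * ∑ i ∈ Finset.range (w₁ * d), (-1 : ℂ) ^ i * χ (i : ZMod d) *
        genEuler d χ 1 n ((w₂ : ℂ) * x + ((w₂ : ℂ) / (w₁ : ℂ)) * i) =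
      (w₂ : ℂ) ^ n * ∑ i ∈ Finset.range (w₂ * d), (-1 : ℂ) ^ i * χ (i : ZMod d) *
        genEuler d χ 1 n ((w₁ : ℂ) * x + ((w₁ : ℂ) / (w₂ : ℂ)) * i) := by
  have main : ∀ w v : ℕ, 0 < w →
      (w : ℂ) ^ n * ∑ i ∈ Finset.range (w * d), (-1 : ℂ) ^ i * χ (i : ZMod d) *
          genEuler d χ 1 n ((v : ℂ) * x + ((v : ℂ) / (w : ℂ)) * i)
        = (n.factorial : ℂ) * PowerSeries.coeff n
            (PowerSeries.rescale (w : ℂ) (genEulerSeries d χ) *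
              (EE ((w : ℂ) * (v : ℂ) * x) * ∑ i ∈ Finset.range (w * d),
                ((-1 : ℂ) ^ i * χ (i : ZMod d)) • EE ((v : ℂ) * i))) := by
    intro w v hw
    have hw0 : (w : ℂ) ≠ 0 := Nat.cast_ne_zero.mpr hw.ne'
    have step1 : ∀ i : ℕ, ((v : ℂ) * x + ((v : ℂ) / (w : ℂ)) * i) * w
        = (w : ℂ) * (v : ℂ) * x + (v : ℂ) * i := by
      intro i; field_simp
    have hrs : PowerSeries.rescale (w : ℂ) (genEulerSeries d χ *
          ∑ i ∈ Finset.range (w * d), ((-1 : ℂ) ^ i * χ (i : ZMod d)) •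
            EE ((v : ℂ) * x + ((v : ℂ) / (w : ℂ)) * i))
        = PowerSeries.rescale (w : ℂ) (genEulerSeries d χ) *
            (EE ((w : ℂ) * (v : ℂ) * x) * ∑ i ∈ Finset.range (w * d),
              ((-1 : ℂ) ^ i * χ (i : ZMod d)) • EE ((v : ℂ) * i)) := by
      rw [map_mul, map_sum]
      congr 1
      rw [Finset.mul_sum]
      apply Finset.sum_congr rfl
      intro i _
      rw [rescale_smul', rescale_EE, step1 i, ← EE_mul, mul_smul_comm]
    have key2 : PowerSeries.coeff n (genEulerSeries d χ *
          ∑ i ∈ Finset.range (w * d), ((-1 : ℂ) ^ i * χ (i : ZMod d)) •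
            EE ((v : ℂ) * x + ((v : ℂ) / (w : ℂ)) * i))
        = ∑ i ∈ Finset.range (w * d), ((-1 : ℂ) ^ i * χ (i : ZMod d)) *
            PowerSeries.coeff n (genEulerSeries d χ *
              EE ((v : ℂ) * x + ((v : ℂ) / (w : ℂ)) * i)) := by
      rw [Finset.mul_sum, map_sum]
      apply Finset.sum_congr rfl
      intro i _
      rw [mul_smul_comm, map_smul, smul_eq_mul]
    rw [← hrs, PowerSeries.coeff_rescale, key2, Finset.mul_sum, Finset.mul_sum, Finset.mul_sum]
    apply Finset.sum_congr rfl
    intro i _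
    simp only [genEuler, pow_one, EE_def]
    ring
  rw [main w₁ w₂ hw₁0, main w₂ w₁ hw₂0]
  congr 1
  have hk := key_identity d hd χ w₁ w₂ hw₁ hw₂
  rw [show (w₂ : ℂ) * (w₁ : ℂ) * x = (w₁ : ℂ) * (w₂ : ℂ) * x by ring]
  set F₁ := PowerSeries.rescale (w₁ : ℂ) (genEulerSeries d χ)
  set F₂ := PowerSeries.rescale (w₂ : ℂ) (genEulerSeries d χ)
  set S₂ := ∑ i ∈ Finset.range (w₁ * d), ((-1 : ℂ) ^ i * χ (i : ZMod d)) • EE ((w₂ : ℂ) * i)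
  set S₁ := ∑ i ∈ Finset.range (w₂ * d), ((-1 : ℂ) ^ i * χ (i : ZMod d)) • EE ((w₁ : ℂ) * i)
  set Ex := EE ((w₁ : ℂ) * (w₂ : ℂ) * x)
  congr 1
  calc F₁ * (Ex * S₂) = Ex * (F₁ * S₂) := by ring
    _ = Ex * (F₂ * S₁) := by rw [hk]
    _ = F₂ * (Ex * S₁) := by ring
end
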